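/- Let q = p^s be a prime power with q ≥ 3 and set n = q − 1. Then for every 1 ≤ r ≤ n there exists a linear code of length n and dimension r over the finite field GF(q) in which every nonzero codeword has Hamming weight at least n − r + 1; that is, for every rate r/n an MDS (n, r, n−r+1) code exists over GF(q) with n = q − 1. -/

import Mathlib

/-- The Hamming weight of a vector: the number of its nonzero coordinates. -/
noncomputable def hammingWt {n : ℕ} {F : Type*} [Zero F] (v : Fin n → F) : ℕ :=
  Nat.card {j : Fin n // v j ≠ 0}

/-- Let `q = p^s` be a prime power with `q ≥ 3` and set
`n = q - 1`.  Then for every `1 ≤ r ≤ n` there exists a linear code of length `n`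
and dimension `r` over the finite field `GF(q)` in which every nonzero codeword
has Hamming weight at least `n - r + 1`: for every rate `r/n` an MDS
`(n, r, n-r+1)` code exists over `GF(q)` with `n = q - 1`. -/
theorem exists_mds_code_over_galois_field_full_length (p s : ℕ) [hp : Fact p.Prime]
    (hq : 3 ≤ p ^ s) (r : ℕ) (hr : 1 ≤ r) (hrn : r ≤ p ^ s - 1) :
    ∃ C : Submodule (GaloisField p s) (Fin (p ^ s - 1) → GaloisField p s),
      Module.finrank (GaloisField p s) C = r ∧
        ∀ c ∈ C, c ≠ 0 → (p ^ s - 1) - r + 1 ≤ hammingWt c := by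
  classical
  set F := GaloisField p s with hF
  haveI : Fintype F := Fintype.ofFinite F
  have hs : s ≠ 0 := by rintro rfl; simp at hq
  have hcard : Fintype.card F = p ^ s := by rw [← Nat.card_eq_fintype_card]; exact GaloisField.card p s hs
  set n := p ^ s - 1 with hn
  have hnF : n ≤ Fintype.card F := by omega
  obtain ⟨pt⟩ : Nonempty (Fin n ↪ F) := by
    rw [Function.Embedding.nonempty_iff_card_le]
    simpa using hnF
  let ev : Polynomial F →ₗ[F] (Fin n → F) :=
    { toFun := fun f j => f.eval (pt j)
      map_add' := by intros; funext j; simp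
      map_smul' := by intros; funext j; simp }
  let ev' : Polynomial.degreeLT F r →ₗ[F] (Fin n → F) :=
    ev.comp (Polynomial.degreeLT F r).subtype
  -- roots bound helper
  have key : ∀ g : Polynomial F, g ∈ Polynomial.degreeLT F r → g ≠ 0 →
      (Finset.univ.filter (fun j : Fin n => g.eval (pt j) = 0)).card ≤ r - 1 := by
    intro g hg hg0
    have hdeg : g.natDegree < r := by
      rw [Polynomial.natDegree_lt_iff_degree_lt hg0]
      exact_mod_cast (Polynomial.mem_degreeLT.mp hg)
    have hsub : (Finset.univ.filter (fun j : Fin n => g.eval (pt j) = 0)).card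
        ≤ g.roots.toFinset.card := by
      apply Finset.card_le_card_of_injOn pt
      · intro j hj
        simp only [Finset.mem_coe, Finset.mem_filter] at hj
        simp [Polynomial.mem_roots, hg0, Polynomial.IsRoot, hj.2]
      · exact fun a _ b _ h => pt.injective h
    have := g.roots.toFinset_card_le
    have := Polynomial.card_roots' g
    omega
  have hinj : Function.Injective ev' := by
    rw [← LinearMap.ker_eq_bot, LinearMap.ker_eq_bot']
    rintro ⟨g, hg⟩ hz
    by_contra hne
    have hg0 : g ≠ 0 := by simpa [Subtype.ext_iff] using hne
    have hall : (Finset.univ.filter (fun j : Fin n => g.eval (pt j) = 0)) = Finset.univ := by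
      ext j
      simp only [Finset.mem_filter, Finset.mem_univ, true_and, iff_true]
      have := congrFun hz j
      simpa [ev', ev] using this
    have := key g hg hg0
    rw [hall] at this
    simp only [Finset.card_univ, Fintype.card_fin] at this
    omega
  refine ⟨LinearMap.range ev', ?_, ?_⟩
  · rw [LinearMap.finrank_range_of_inj hinj,
      (Polynomial.degreeLTEquiv F r).finrank_eq, Module.finrank_fin_fun]
  · rintro c ⟨⟨g, hg⟩, rfl⟩ hc0
    have hg0 : g ≠ 0 := by
      rintro rfl
      exact hc0 (map_zero ev')
    have hZ := key g hg hg0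
    have hW : hammingWt (ev' ⟨g, hg⟩) =
        (Finset.univ.filter (fun j : Fin n => ¬ g.eval (pt j) = 0)).card := by
      rw [hammingWt, Nat.card_eq_fintype_card, Fintype.card_subtype]
      rfl
    have hsplit := Finset.card_filter_add_card_filter_not
      (s := (Finset.univ : Finset (Fin n))) (p := fun j => g.eval (pt j) = 0)
    simp only [Finset.card_univ, Fintype.card_fin] at hsplit
    omega
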